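/- Let k > 0, φ > 0, set c0 = k·coth(φ), let c > 0 satisfy (c − c0)² > k², and set β = 2ck/((c − c0)² − k²). For real variables ξ and η define Û(ξ,η) = [2(c + kβ)cosh(φ) + (k(1 + β² + c²η²) + 2βc)sinh(φ) + 2c·cos(kξ)] / [(1 + β² + c²η²)cosh(φ) + 2β·sinh(φ) + (1 − β² + c²η²)cos(kξ) + 2βcη·sin(kξ)]. Then for every fixed real ξ, Û(ξ,η) → k·sinh(φ)/(cos(kξ) + cosh(φ)) as η → +∞ and as η → −∞; i.e., the breather converges to the traveling periodic wave with no phase shift. -/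

import Mathlib

lemma breather_aux (A B C D E : ℝ) (hD : D ≠ 0) (l : Filter ℝ)
    (h2 : Filter.Tendsto (fun η : ℝ => η ^ 2) l Filter.atTop)
    (h1 : Filter.Tendsto (fun η : ℝ => η⁻¹) l (nhds 0))
    (hl : ∀ᶠ η : ℝ in l, η ≠ 0) :
    Filter.Tendsto (fun η : ℝ => (A + C * η ^ 2) / (B + D * η ^ 2 + E * η)) l
      (nhds (C / D)) := by
  have h2inv : Filter.Tendsto (fun η : ℝ => (η ^ 2)⁻¹) l (nhds 0) :=
    h2.inv_tendsto_atTop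
  have hnum : Filter.Tendsto (fun η : ℝ => A * (η ^ 2)⁻¹ + C) l (nhds C) := by
    simpa using (h2inv.const_mul A).add_const C
  have hden : Filter.Tendsto (fun η : ℝ => B * (η ^ 2)⁻¹ + D + E * η⁻¹) l
      (nhds D) := by
    simpa using ((h2inv.const_mul B).add_const D).add (h1.const_mul E)
  refine Filter.Tendsto.congr' ?_ (hnum.div hden hD)
  filter_upwards [hl] with η hη
  have hη2 : η ^ 2 ≠ 0 := pow_ne_zero _ hη
  simp only [Pi.div_apply]
  rw [show A * (η ^ 2)⁻¹ + C = (A + C * η ^ 2) / η ^ 2 by field_simp,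
    show B * (η ^ 2)⁻¹ + D + E * η⁻¹ = (B + D * η ^ 2 + E * η) / η ^ 2 by
      field_simp,
    div_div_div_cancel_right₀ hη2]

/-- in the traveling coordinates `(ξ, η)`, the single-breather
solution of the Benjamin–Ono equation converges, as `η → ±∞` for each fixed
`ξ`, to the traveling periodic wave `k·sinh φ/(cos(kξ) + cosh φ)` (no phase
shift). -/
theorem breather_asymptotics (k φ c0 c β : ℝ) (hk : 0 < k) (hφ : 0 < φ)
    (hc0 : c0 = k * Real.cosh φ / Real.sinh φ)
    (hc : 0 < c) (hcon : (c - c0) ^ 2 > k ^ 2)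
    (hβ : β = 2 * c * k / ((c - c0) ^ 2 - k ^ 2))
    (U : ℝ → ℝ → ℝ)
    (hU : ∀ ξ η : ℝ, U ξ η =
      (2 * (c + k * β) * Real.cosh φ
          + (k * (1 + β ^ 2 + c ^ 2 * η ^ 2) + 2 * β * c) * Real.sinh φ
          + 2 * c * Real.cos (k * ξ))
        / ((1 + β ^ 2 + c ^ 2 * η ^ 2) * Real.cosh φ + 2 * β * Real.sinh φ
          + (1 - β ^ 2 + c ^ 2 * η ^ 2) * Real.cos (k * ξ)
          + 2 * β * c * η * Real.sin (k * ξ))) :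
    ∀ ξ : ℝ,
      Filter.Tendsto (fun η => U ξ η) Filter.atTop
        (nhds (k * Real.sinh φ / (Real.cos (k * ξ) + Real.cosh φ))) ∧
      Filter.Tendsto (fun η => U ξ η) Filter.atBot
        (nhds (k * Real.sinh φ / (Real.cos (k * ξ) + Real.cosh φ))) := by
  intro ξ
  set ch := Real.cosh φ
  set sh := Real.sinh φ
  set co := Real.cos (k * ξ)
  set si := Real.sin (k * ξ)
  have hch : 1 < ch := (Real.one_lt_cosh).2 hφ.ne'
  have hco : -1 ≤ co := Real.neg_one_le_cos _
  have hsum : 0 < ch + co := by linarith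
  have hD0 : c ^ 2 * (ch + co) ≠ 0 := by positivity
  -- the limit value
  have hval : (k * c ^ 2 * sh) / (c ^ 2 * (ch + co)) = k * sh / (co + ch) := by
    rw [show k * c ^ 2 * sh = (k * sh) * c ^ 2 by ring,
      show c ^ 2 * (ch + co) = (co + ch) * c ^ 2 by ring,
      mul_div_mul_right _ _ (by positivity : (c : ℝ) ^ 2 ≠ 0)]
  set A := 2 * (c + k * β) * ch + (k * (1 + β ^ 2) + 2 * β * c) * sh + 2 * c * co
  set B := (1 + β ^ 2) * ch + 2 * β * sh + (1 - β ^ 2) * co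
  have key : ∀ η : ℝ, U ξ η =
      (A + (k * c ^ 2 * sh) * η ^ 2)
        / (B + (c ^ 2 * (ch + co)) * η ^ 2 + (2 * β * c * si) * η) := by
    intro η
    rw [hU ξ η]
    congr 1 <;> · simp only [A, B]; ring
  constructor
  · have := breather_aux A B (k * c ^ 2 * sh) (c ^ 2 * (ch + co)) (2 * β * c * si)
      hD0 Filter.atTop (Filter.tendsto_pow_atTop two_ne_zero) tendsto_inv_atTop_zero
      (Filter.eventually_ne_atTop 0)
    rw [hval] at this
    exact this.congr fun η => (key η).symm
  · have hneg : Filter.Tendsto (fun η : ℝ => -η) Filter.atBot Filter.atTop :=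
      Filter.tendsto_neg_atBot_atTop
    have h2 : Filter.Tendsto (fun η : ℝ => η ^ 2) Filter.atBot Filter.atTop :=
      ((Filter.tendsto_pow_atTop (two_ne_zero : (2:ℕ) ≠ 0)).comp hneg).congr
        (fun η => by simp [Function.comp_def])
    have h1b : Filter.Tendsto (fun η : ℝ => η⁻¹) Filter.atBot (nhds 0) := by
      have h := (tendsto_inv_atTop_zero.comp hneg).neg
      simp only [Function.comp_def, neg_zero, inv_neg, neg_neg] at h
      exact h
    have := breather_aux A B (k * c ^ 2 * sh) (c ^ 2 * (ch + co)) (2 * β * c * si)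
      hD0 Filter.atBot h2 h1b
      (Filter.eventually_ne_atBot 0)
    rw [hval] at this
    exact this.congr fun η => (key η).symm
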